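/- Let α be a real number with α ∉ ℤ and A = (a_{nk}) an infinite real matrix. Then A maps c₀(Δ^(α)) into ℓ∞ (i.e., for every x with (Δ^(α)x)_n → 0 the series A_n x = ∑_k a_{nk} x_k converge and (A_n x)_n is bounded) if and only if the series defining â_{nk} and w^{(A_n)}_{mk} converge and the conditions sup_n ∑_{k=0}^∞ |â_{nk}| < ∞ and, for every n, sup_m ∑_{k=0}^{m} |w^{(A_n)}_{mk}| < ∞ hold, where â_{nk} = ∑_{j=k}^∞ (−1)^{j−k} Γ(−α+1)/((j−k)!·Γ(−α−j+k+1)) a_{nj} and w^{(A_n)}_{mk} = ∑_{j=m}^∞ (−1)^{j−k} Γ(−α+1)/((j−k)!·Γ(−α−j+k+1)) a_{nj} for 0 ≤ k ≤ m. -/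
import Mathlib


open Filter Finset Topology

/-- The fractional difference matrix `Δ^(α)`. -/
noncomputable def fracDelta (α : ℝ) (n k : ℕ) : ℝ :=
  if k ≤ n then
    (-1 : ℝ) ^ (n - k) * Real.Gamma (α + 1) /
      ((Nat.factorial (n - k) : ℝ) * Real.Gamma (α - n + k + 1))
  else 0

/-- `(Δ^(α)x)_n = ∑_{k=0}^n Δ^(α)_{nk} x_k`. -/
noncomputable def fracDeltaSeq (α : ℝ) (x : ℕ → ℝ) (n : ℕ) : ℝ :=
  ∑ k ∈ Finset.range (n + 1), fracDelta α n k * x k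

/-- Membership in `c₀(Δ^(α))`. -/
def memC0Delta (α : ℝ) (x : ℕ → ℝ) : Prop :=
  Tendsto (fracDeltaSeq α x) atTop (nhds 0)

/-- Classical convergence of the series `∑_{j=0}^∞ f j` to `L`. -/
def SeriesHasSum (f : ℕ → ℝ) (L : ℝ) : Prop :=
  Tendsto (fun m => ∑ j ∈ Finset.range m, f j) atTop (nhds L)

open Polynomial

lemma gamma_ratio {β : ℝ} (hβ : ∀ m : ℤ, β ≠ (m : ℝ)) (r : ℕ) :
    Real.Gamma (β + 1) = (descPochhammer ℤ r).smeval β * Real.Gamma (β - r + 1) := by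
  induction r with
  | zero => simp [descPochhammer_zero, Polynomial.smeval_one]
  | succ r ih =>
      have h1 : β - r ≠ 0 := sub_ne_zero.mpr (by exact_mod_cast hβ r)
      have h2 : Real.Gamma (β - r + 1) = (β - r) * Real.Gamma (β - r) := Real.Gamma_add_one h1
      rw [descPochhammer_succ_right, Polynomial.smeval_mul]
      have h3 : (X - (r : ℤ[X])).smeval β = β - r := by
        simp [Polynomial.smeval_sub, Polynomial.smeval_X, Polynomial.smeval_natCast]
      rw [h3, ih, h2]
      have : β - (r + 1 : ℕ) + 1 = β - r := by push_cast; ring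
      rw [this]
      ring

lemma fracDelta_eq_choose {β : ℝ} (hβ : ∀ m : ℤ, β ≠ (m : ℝ)) {n k : ℕ} (h : k ≤ n) :
    fracDelta β n k = (-1 : ℝ) ^ (n - k) * Ring.choose β (n - k) := by
  have hG : ∀ (r : ℕ), Real.Gamma (β - r + 1) ≠ 0 := by
    intro r
    apply Real.Gamma_ne_zero
    intro m hm
    exact hβ (-m + r - 1) (by push_cast; linarith)
  have hch : (Nat.factorial (n - k) : ℝ) * Ring.choose β (n - k)
      = (descPochhammer ℤ (n - k)).smeval β := by
    rw [Ring.descPochhammer_eq_factorial_smul_choose, nsmul_eq_mul]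
  have hcast : (β - n + k + 1) = β - (n - k : ℕ) + 1 := by
    have : ((n - k : ℕ) : ℝ) = (n : ℝ) - k := by
      push_cast [h]; ring
    rw [this]; ring
  have hg : Real.Gamma (β - ↑n + ↑k + 1) ≠ 0 := by rw [hcast]; exact hG (n - k)
  rw [fracDelta, if_pos h, hcast, gamma_ratio hβ (n - k), ← hch]
  rw [hcast] at hg
  have hf : (Nat.factorial (n - k) : ℝ) ≠ 0 := Nat.cast_ne_zero.mpr (Nat.factorial_ne_zero _)
  rw [mul_div_assoc]
  congr 1
  rw [mul_right_comm, mul_div_cancel_left₀ _ (mul_ne_zero hf hg)]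

lemma neg_not_int {β : ℝ} (hβ : ∀ m : ℤ, β ≠ (m : ℝ)) : ∀ m : ℤ, -β ≠ (m : ℝ) := by
  intro m h
  exact hβ (-m) (by push_cast; linarith)

lemma choose_vandermonde (β : ℝ) (p : ℕ) :
    ∑ i ∈ range (p + 1), Ring.choose β i * Ring.choose (-β) (p - i)
      = if p = 0 then 1 else 0 := by
  have h := Ring.add_choose_eq (R := ℝ) (r := β) (s := -β) p (Commute.all _ _)
  rw [add_neg_cancel, Ring.choose_zero_ite,
    Finset.Nat.sum_antidiagonal_eq_sum_range_succ_mk] at h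
  exact h.symm

lemma fracDelta_triangle (β : ℝ) {n k : ℕ} (h : n < k) : fracDelta β n k = 0 := by
  rw [fracDelta, if_neg (by omega)]

lemma fracDelta_inv {β : ℝ} (hβ : ∀ m : ℤ, β ≠ (m : ℝ)) (n j : ℕ) :
    ∑ k ∈ range (n + 1), fracDelta β n k * fracDelta (-β) k j
      = if n = j then 1 else 0 := by
  by_cases hjn : j ≤ n
  · have hsub : Finset.Icc j n ⊆ range (n + 1) := by
      intro k hk; simp only [Finset.mem_Icc] at hk; simp [Finset.mem_range]; omega
    rw [← Finset.sum_subset hsub (by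
      intro k hk hk2
      simp only [Finset.mem_range] at hk
      simp only [Finset.mem_Icc, not_and, not_le] at hk2
      have : k < j := by omega
      rw [fracDelta_triangle _ this, mul_zero])]
    have hre : ∀ k ∈ Finset.Icc j n, fracDelta β n k * fracDelta (-β) k j
        = (-1 : ℝ) ^ (n - j) * (Ring.choose β (n - k) * Ring.choose (-β) (k - j)) := by
      intro k hk
      simp only [Finset.mem_Icc] at hk
      rw [fracDelta_eq_choose hβ hk.2, fracDelta_eq_choose (neg_not_int hβ) hk.1]
      have : (-1 : ℝ) ^ (n - k) * ((-1 : ℝ) ^ (k - j)) = (-1 : ℝ) ^ (n - j) := by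
        rw [← pow_add]
        congr 1
        omega
      calc (-1:ℝ) ^ (n-k) * Ring.choose β (n-k) * ((-1:ℝ) ^ (k-j) * Ring.choose (-β) (k-j))
          = ((-1:ℝ) ^ (n-k) * ((-1:ℝ) ^ (k-j))) * (Ring.choose β (n-k) * Ring.choose (-β) (k-j)) := by ring
        _ = _ := by rw [this]
    rw [Finset.sum_congr rfl hre, ← Finset.mul_sum]
    have hIcc : ∑ k ∈ Finset.Icc j n, Ring.choose β (n - k) * Ring.choose (-β) (k - j)
        = ∑ i ∈ range ((n - j) + 1), Ring.choose β ((n - j) - i) * Ring.choose (-β) i := by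
      rw [← Finset.Ico_add_one_right_eq_Icc, Finset.sum_Ico_eq_sum_range]
      have : n + 1 - j = (n - j) + 1 := by omega
      rw [this]
      refine Finset.sum_congr rfl ?_
      intro i hi
      simp only [Finset.mem_range] at hi
      congr 2 <;> omega
    have hrefl : ∑ i ∈ range ((n - j) + 1), Ring.choose β ((n - j) - i) * Ring.choose (-β) i
        = ∑ i ∈ range ((n - j) + 1), Ring.choose β i * Ring.choose (-β) ((n - j) - i) := by
      rw [← Finset.sum_range_reflect]
      refine Finset.sum_congr rfl ?_
      intro i hi
      simp only [Finset.mem_range] at hi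
      congr 2 <;> omega
    rw [hIcc, hrefl, choose_vandermonde]
    by_cases hnj : n = j
    · simp [hnj]
    · have : n - j ≠ 0 := by omega
      simp [hnj, this]
  · have : ∀ k ∈ range (n + 1), fracDelta β n k * fracDelta (-β) k j = 0 := by
      intro k hk
      simp only [Finset.mem_range] at hk
      rw [fracDelta_triangle (-β) (by omega), mul_zero]
    rw [Finset.sum_congr rfl this, Finset.sum_const_zero, if_neg (by omega)]

lemma triangle_compose {T S : ℕ → ℕ → ℝ}
    (hS : ∀ {n k : ℕ}, n < k → S n k = 0)
    (hinv : ∀ n j, ∑ k ∈ range (n + 1), T n k * S k j = if n = j then 1 else 0)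
    (y : ℕ → ℝ) (n : ℕ) :
    ∑ k ∈ range (n + 1), T n k * (∑ j ∈ range (k + 1), S k j * y j) = y n := by
  have hext : ∀ k ∈ range (n + 1),
      T n k * (∑ j ∈ range (k + 1), S k j * y j)
        = ∑ j ∈ range (n + 1), T n k * (S k j * y j) := by
    intro k hk
    simp only [Finset.mem_range] at hk
    rw [← Finset.mul_sum]
    congr 1
    refine Finset.sum_subset (by intro j hj; simp only [Finset.mem_range] at *; omega) ?_
    intro j hj hj2
    simp only [Finset.mem_range] at hj hj2
    rw [hS (by omega), zero_mul]
  rw [Finset.sum_congr rfl hext, Finset.sum_comm]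
  have : ∀ j ∈ range (n + 1), ∑ k ∈ range (n + 1), T n k * (S k j * y j)
      = (if n = j then 1 else 0) * y j := by
    intro j hj
    rw [← hinv n j, Finset.sum_mul]
    refine Finset.sum_congr rfl ?_
    intro k hk
    ring
  rw [Finset.sum_congr rfl this]
  simp [ite_mul, Finset.sum_ite_eq]

noncomputable def Sapp (α : ℝ) (y : ℕ → ℝ) (k : ℕ) : ℝ :=
  ∑ j ∈ range (k + 1), fracDelta (-α) k j * y j

lemma fracDeltaSeq_Sapp {α : ℝ} (hα : ∀ m : ℤ, α ≠ (m : ℝ)) (y : ℕ → ℝ) (n : ℕ) :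
    fracDeltaSeq α (Sapp α y) n = y n := by
  exact triangle_compose (fun h => fracDelta_triangle _ h) (fracDelta_inv hα) y n

lemma Sapp_fracDeltaSeq {α : ℝ} (hα : ∀ m : ℤ, α ≠ (m : ℝ)) (x : ℕ → ℝ) (k : ℕ) :
    Sapp α (fracDeltaSeq α x) k = x k := by
  have h := fracDelta_inv (neg_not_int hα)
  rw [neg_neg] at h
  exact triangle_compose (fun h => fracDelta_triangle _ h) h x k

lemma regroup (S : ℕ → ℕ → ℝ) (hS : ∀ {n k : ℕ}, n < k → S n k = 0)
    (a y : ℕ → ℝ) (m : ℕ) :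
    ∑ k ∈ range m, a k * (∑ j ∈ range (k + 1), S k j * y j)
      = ∑ j ∈ range m, (∑ k ∈ Finset.Ico j m, S k j * a k) * y j := by
  have hext : ∀ k ∈ range m,
      a k * (∑ j ∈ range (k + 1), S k j * y j)
        = ∑ j ∈ range m, a k * (S k j * y j) := by
    intro k hk
    simp only [Finset.mem_range] at hk
    rw [← Finset.mul_sum]
    congr 1
    refine Finset.sum_subset (by intro j hj; simp only [Finset.mem_range] at *; omega) ?_
    intro j hj hj2
    simp only [Finset.mem_range] at hj hj2
    rw [hS (by omega), zero_mul]
  rw [Finset.sum_congr rfl hext, Finset.sum_comm]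
  refine Finset.sum_congr rfl ?_
  intro j hj
  simp only [Finset.mem_range] at hj
  rw [Finset.sum_mul, ← Nat.Ico_zero_eq_range,
    ← Finset.sum_subset (Finset.Ico_subset_Ico_left (Nat.zero_le j)) (by
      intro k hk hk2
      simp only [Finset.mem_Ico] at hk hk2
      rw [hS (by omega)]
      ring)]
  refine Finset.sum_congr rfl ?_
  intro k hk
  ring

open ZeroAtInfty in
noncomputable def mkC0 (y : ℕ → ℝ) (hy : Tendsto y atTop (nhds 0)) : C₀(ℕ, ℝ) :=
  { toFun := y
    continuous_toFun := continuous_of_discreteTopology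
    zero_at_infty' := by rwa [cocompact_eq_cofinite, Nat.cofinite_eq_atTop] }

open ZeroAtInfty

lemma mkC0_apply (y : ℕ → ℝ) (hy : Tendsto y atTop (nhds 0)) (k : ℕ) :
    (mkC0 y hy) k = y k := rfl

lemma abs_apply_le_norm (f : C₀(ℕ, ℝ)) (k : ℕ) : |f k| ≤ ‖f‖ := by
  rw [← ZeroAtInftyContinuousMap.norm_toBCF_eq_norm]
  exact f.toBCF.norm_coe_le_norm k

lemma c0_norm_le (f : C₀(ℕ, ℝ)) {C : ℝ} (hC : 0 ≤ C) (h : ∀ k, |f k| ≤ C) : ‖f‖ ≤ C := by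
  rw [← ZeroAtInftyContinuousMap.norm_toBCF_eq_norm]
  exact (BoundedContinuousFunction.norm_le hC).mpr h

noncomputable def rowCLM (c : ℕ → ℝ) (m : ℕ) : C₀(ℕ, ℝ) →L[ℝ] ℝ :=
  LinearMap.mkContinuous
    { toFun := fun y => ∑ j ∈ range m, c j * y j
      map_add' := by
        intro y z
        simp [ZeroAtInftyContinuousMap.add_apply, mul_add, Finset.sum_add_distrib]
      map_smul' := by
        intro r y
        simp only [ZeroAtInftyContinuousMap.smul_apply, smul_eq_mul, RingHom.id_apply,
          Finset.mul_sum]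
        refine Finset.sum_congr rfl ?_
        intro j hj
        ring }
    (∑ j ∈ range m, |c j|) (by
      intro y
      simp only [LinearMap.coe_mk, AddHom.coe_mk, Real.norm_eq_abs]
      calc |∑ j ∈ range m, c j * y j| ≤ ∑ j ∈ range m, |c j * y j| :=
            Finset.abs_sum_le_sum_abs _ _
        _ ≤ ∑ j ∈ range m, |c j| * ‖y‖ := by
            refine Finset.sum_le_sum ?_
            intro j hj
            rw [abs_mul]
            exact mul_le_mul_of_nonneg_left (abs_apply_le_norm y j) (abs_nonneg _)
        _ = (∑ j ∈ range m, |c j|) * ‖y‖ := by rw [Finset.sum_mul])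

lemma rowCLM_apply (c : ℕ → ℝ) (m : ℕ) (y : C₀(ℕ, ℝ)) :
    rowCLM c m y = ∑ j ∈ range m, c j * y j := rfl

noncomputable def signVec (c : ℕ → ℝ) (m : ℕ) : C₀(ℕ, ℝ) :=
  mkC0 (fun j => if j < m then (if 0 ≤ c j then 1 else -1) else 0)
    (by
      refine tendsto_const_nhds.congr' ?_
      filter_upwards [eventually_ge_atTop m] with j hj
      simp [Nat.not_lt.mpr hj])

lemma signVec_norm_le (c : ℕ → ℝ) (m : ℕ) : ‖signVec c m‖ ≤ 1 := by
  refine c0_norm_le _ zero_le_one ?_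
  intro k
  simp only [signVec, mkC0_apply]
  split_ifs <;> simp

lemma rowCLM_signVec (c : ℕ → ℝ) (m : ℕ) :
    rowCLM c m (signVec c m) = ∑ j ∈ range m, |c j| := by
  rw [rowCLM_apply]
  refine Finset.sum_congr rfl ?_
  intro j hj
  simp only [Finset.mem_range] at hj
  simp only [signVec, mkC0_apply, if_pos hj]
  rcases le_or_gt 0 (c j) with h | h
  · rw [if_pos h, mul_one, abs_of_nonneg h]
  · rw [if_neg (not_le.mpr h), abs_of_neg h]
    ring

lemma seriesShift {c : ℕ → ℝ} {k : ℕ} (hc : ∀ j < k, c j = 0) (L : ℝ) :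
    SeriesHasSum (fun j => c (k + j)) L ↔
      Tendsto (fun m => ∑ j ∈ range m, c j) atTop (nhds L) := by
  have key : ∀ m, ∑ j ∈ range m, c (k + j) = ∑ j ∈ range (k + m), c j := by
    intro m
    have h1 : ∑ j ∈ range (k + m), c j = ∑ j ∈ Finset.Ico k (k + m), c j := by
      rw [Finset.range_eq_Ico]
      refine (Finset.sum_subset (Finset.Ico_subset_Ico_left (Nat.zero_le k)) ?_).symm
      intro j hj hj2
      simp only [Finset.mem_Ico] at hj hj2
      exact hc j (by omega)
    rw [h1, Finset.sum_Ico_eq_sum_range]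
    simp only [Nat.add_sub_cancel_left]
  constructor
  · intro h
    unfold SeriesHasSum at h
    simp only [key] at h
    have h3 := h.comp (tendsto_sub_atTop_nat k)
    refine h3.congr' ?_
    filter_upwards [eventually_ge_atTop k] with m hm
    simp only [Function.comp_apply]
    have hmk : k + (m - k) = m := by omega
    rw [hmk]
  · intro h
    unfold SeriesHasSum
    simp only [key]
    exact h.comp ((tendsto_add_atTop_nat k).congr (fun n => add_comm n k))

lemma bounded_of_tendsto {y : ℕ → ℝ} {L : ℝ} (hy : Tendsto y atTop (nhds L)) :
    ∃ Y : ℝ, 0 ≤ Y ∧ ∀ j, |y j| ≤ Y := by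
  have h := Metric.tendsto_atTop.mp hy 1 one_pos
  obtain ⟨N, hN⟩ := h
  refine ⟨|L| + 1 + ∑ j ∈ range N, |y j|, by positivity, ?_⟩
  intro j
  rcases lt_or_ge j N with hj | hj
  · have h1 : |y j| ≤ ∑ i ∈ range N, |y i| :=
      Finset.single_le_sum (f := fun i => |y i|) (fun i _ => abs_nonneg _)
        (Finset.mem_range.mpr hj)
    have h2 : (0:ℝ) ≤ |L| + 1 := by positivity
    linarith
  · have h1 := hN j hj
    rw [Real.dist_eq] at h1
    have h2 : (0:ℝ) ≤ ∑ i ∈ range N, |y i| :=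
      Finset.sum_nonneg (fun i _ => abs_nonneg _)
    have h3 : |y j| ≤ |y j - L| + |L| := by
      calc |y j| = |y j - L + L| := by ring_nf
        _ ≤ |y j - L| + |L| := abs_add_le _ _
    linarith

lemma c0_tendsto (y : C₀(ℕ, ℝ)) : Tendsto (⇑y) atTop (nhds 0) := by
  have h := zero_at_infty y
  rwa [cocompact_eq_cofinite, Nat.cofinite_eq_atTop] at h

noncomputable def colPartial (α : ℝ) (a : ℕ → ℕ → ℝ) (n k m : ℕ) : ℝ :=
  ∑ i ∈ range m, fracDelta (-α) i k * a n i

lemma colPartial_Ico (α : ℝ) (a : ℕ → ℕ → ℝ) (n k m : ℕ) :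
    ∑ i ∈ Finset.Ico k m, fracDelta (-α) i k * a n i = colPartial α a n k m := by
  rw [colPartial, ← Nat.Ico_zero_eq_range]
  refine Finset.sum_subset (Finset.Ico_subset_Ico_left (Nat.zero_le k)) ?_
  intro i hi hi2
  simp only [Finset.mem_Ico] at hi hi2
  rw [fracDelta_triangle _ (by omega), zero_mul]

lemma col_zero (α : ℝ) (a : ℕ → ℕ → ℝ) (n k : ℕ) :
    ∀ j < k, fracDelta (-α) j k * a n j = 0 := by
  intro j hj
  rw [fracDelta_triangle _ hj, zero_mul]

lemma Ahat_iff (α : ℝ) (a : ℕ → ℕ → ℝ) (n k : ℕ) (L : ℝ) :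
    SeriesHasSum (fun j => fracDelta (-α) (k + j) k * a n (k + j)) L ↔
      Tendsto (fun m => colPartial α a n k m) atTop (nhds L) :=
  seriesShift (col_zero α a n k) L

lemma Wseries (α : ℝ) (a : ℕ → ℕ → ℝ) (n m k : ℕ) {A : ℝ}
    (hA : Tendsto (fun p => colPartial α a n k p) atTop (nhds A)) :
    SeriesHasSum (fun j => fracDelta (-α) (m + j) k * a n (m + j))
      (A - colPartial α a n k m) := by
  unfold SeriesHasSum
  have key : ∀ p, ∑ j ∈ range p, fracDelta (-α) (m + j) k * a n (m + j)
      = colPartial α a n k (m + p) - colPartial α a n k m := by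
    intro p
    have h1 : ∑ j ∈ Finset.Ico m (m + p), fracDelta (-α) j k * a n j
        = ∑ j ∈ range p, fracDelta (-α) (m + j) k * a n (m + j) := by
      rw [Finset.sum_Ico_eq_sum_range]
      simp only [Nat.add_sub_cancel_left]
    rw [← h1, Finset.sum_Ico_eq_sub _ (Nat.le_add_right m p)]
    rfl
  simp only [key]
  have h2 := (hA.comp ((tendsto_add_atTop_nat m).congr (fun p => add_comm p m))).sub_const
    (colPartial α a n k m)
  exact h2

lemma converse_dir {α : ℝ} (hα : ∀ m : ℤ, α ≠ (m : ℝ)) (a : ℕ → ℕ → ℝ)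
    (Ahat : ℕ → ℕ → ℝ) (W : ℕ → ℕ → ℕ → ℝ) {C : ℝ}
    (hAs : ∀ n k, SeriesHasSum (fun j => fracDelta (-α) (k + j) k * a n (k + j)) (Ahat n k))
    (hC : ∀ n m, ∑ k ∈ Finset.range m, |Ahat n k| ≤ C)
    (hWs : ∀ n m k, k ≤ m →
        SeriesHasSum (fun j => fracDelta (-α) (m + j) k * a n (m + j)) (W n m k))
    (hWb : ∀ n, ∃ D : ℝ, ∀ m, ∑ k ∈ Finset.range (m + 1), |W n m k| ≤ D) :
    ∀ x : ℕ → ℝ, memC0Delta α x →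
      ∃ y : ℕ → ℝ, (∀ n, SeriesHasSum (fun k => a n k * x k) (y n)) ∧
        ∃ C' : ℝ, ∀ n, |y n| ≤ C' := by
  intro x hx
  set y : ℕ → ℝ := fracDeltaSeq α x with hydef
  have hy : Tendsto y atTop (nhds 0) := hx
  have hxy : ∀ k, x k = Sapp α y k := fun k => (Sapp_fracDeltaSeq hα x k).symm
  obtain ⟨Y, hY0, hYb⟩ := bounded_of_tendsto hy
  have hC0 : 0 ≤ C := le_trans (by simp) (hC 0 1)
  have hcol : ∀ n k, Tendsto (fun m => colPartial α a n k m) atTop (nhds (Ahat n k)) :=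
    fun n k => (Ahat_iff α a n k _).mp (hAs n k)
  have hWeq : ∀ n m k, k ≤ m → W n m k = Ahat n k - colPartial α a n k m := by
    intro n m k hkm
    exact tendsto_nhds_unique (hWs n m k hkm) (Wseries α a n m k (hcol n k))
  -- abs partial sum bound
  have habs : ∀ n m, ∑ j ∈ range m, |Ahat n j * y j| ≤ C * Y := by
    intro n m
    calc ∑ j ∈ range m, |Ahat n j * y j| ≤ ∑ j ∈ range m, |Ahat n j| * Y := by
          refine Finset.sum_le_sum ?_
          intro j hj
          rw [abs_mul]
          exact mul_le_mul_of_nonneg_left (hYb j) (abs_nonneg _)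
      _ = (∑ j ∈ range m, |Ahat n j|) * Y := by rw [Finset.sum_mul]
      _ ≤ C * Y := mul_le_mul_of_nonneg_right (hC n m) hY0
  have hsum : ∀ n, Summable (fun j => Ahat n j * y j) := by
    intro n
    refine Summable.of_abs ?_
    exact summable_of_sum_range_le (fun j => abs_nonneg _) (habs n)
  refine ⟨fun n => ∑' j, Ahat n j * y j, ?_, ⟨C * Y, ?_⟩⟩
  · intro n
    have hT1 : Tendsto (fun m => ∑ j ∈ range m, Ahat n j * y j) atTop
        (nhds (∑' j, Ahat n j * y j)) := (hsum n).hasSum.tendsto_sum_nat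
    -- T2 → 0
    obtain ⟨D, hD⟩ := hWb n
    have hD' : ∀ m, ∑ j ∈ range m, |W n m j| ≤ D := by
      intro m
      refine le_trans ?_ (hD m)
      exact Finset.sum_le_sum_of_subset_of_nonneg
        (Finset.range_subset_range.mpr (Nat.le_succ m)) (fun i _ _ => abs_nonneg _)
    have hD0 : 0 ≤ D := le_trans (Finset.sum_nonneg (fun i _ => abs_nonneg _)) (hD 0)
    have hT2 : Tendsto (fun m => ∑ j ∈ range m, W n m j * y j) atTop (nhds 0) := by
      rw [NormedAddCommGroup.tendsto_nhds_zero]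
      intro ε hε
      set ε' : ℝ := ε / (2 * (D + 1)) with hε'def
      have hε' : 0 < ε' := by positivity
      obtain ⟨N, hN⟩ := (Metric.tendsto_atTop.mp hy) ε' hε'
      have hyN : ∀ j ≥ N, |y j| ≤ ε' := by
        intro j hj
        have := hN j hj
        rw [Real.dist_eq, sub_zero] at this
        exact le_of_lt this
      have hsmall : Tendsto (fun m => ∑ j ∈ range N, W n m j * y j) atTop (nhds 0) := by
        have : ∀ j ∈ range N, Tendsto (fun m => W n m j * y j) atTop (nhds 0) := by
          intro j _
          have h1 : Tendsto (fun m => Ahat n j - colPartial α a n j m) atTop (nhds 0) := by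
            have := (tendsto_const_nhds (x := Ahat n j) (f := atTop (α := ℕ))).sub (hcol n j)
            simpa using this
          have h2 : Tendsto (fun m => W n m j) atTop (nhds 0) := by
            refine h1.congr' ?_
            filter_upwards [eventually_ge_atTop j] with m hm
            exact (hWeq n m j hm).symm
          simpa using h2.mul_const (y j)
        have := tendsto_finset_sum (range N) this
        simpa using this
      have hsm2 : ∀ᶠ m in atTop, |∑ j ∈ range N, W n m j * y j| < ε / 2 := by
        have := hsmall
        rw [NormedAddCommGroup.tendsto_nhds_zero] at this
        exact this (ε / 2) (by positivity)
      filter_upwards [eventually_ge_atTop N, hsm2] with m hm1 hm2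
      rw [Real.norm_eq_abs]
      have hsplit : ∑ j ∈ range m, W n m j * y j
          = (∑ j ∈ range N, W n m j * y j) + ∑ j ∈ Finset.Ico N m, W n m j * y j := by
        rw [Finset.sum_range_add_sum_Ico _ hm1]
      have htail : |∑ j ∈ Finset.Ico N m, W n m j * y j| ≤ D * ε' := by
        calc |∑ j ∈ Finset.Ico N m, W n m j * y j|
            ≤ ∑ j ∈ Finset.Ico N m, |W n m j * y j| := Finset.abs_sum_le_sum_abs _ _
          _ ≤ ∑ j ∈ Finset.Ico N m, |W n m j| * ε' := by
              refine Finset.sum_le_sum ?_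
              intro j hj
              simp only [Finset.mem_Ico] at hj
              rw [abs_mul]
              exact mul_le_mul_of_nonneg_left (hyN j hj.1) (abs_nonneg _)
          _ = (∑ j ∈ Finset.Ico N m, |W n m j|) * ε' := by rw [Finset.sum_mul]
          _ ≤ D * ε' := by
              refine mul_le_mul_of_nonneg_right ?_ (le_of_lt hε')
              refine le_trans ?_ (hD' m)
              refine Finset.sum_le_sum_of_subset_of_nonneg ?_ (fun i _ _ => abs_nonneg _)
              rw [Finset.range_eq_Ico]
              exact Finset.Ico_subset_Ico_left (Nat.zero_le N)
      have hDε : D * ε' ≤ ε / 2 := by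
        rw [hε'def, mul_comm, div_mul_eq_mul_div,
          div_le_iff₀ (by positivity : (0:ℝ) < 2 * (D + 1))]
        nlinarith [hε.le]
      calc |∑ j ∈ range m, W n m j * y j|
          ≤ |∑ j ∈ range N, W n m j * y j| + |∑ j ∈ Finset.Ico N m, W n m j * y j| := by
            rw [hsplit]; exact abs_add_le _ _
        _ < ε / 2 + ε / 2 := by
            have := le_trans htail hDε
            linarith
        _ = ε := by ring
    -- partial sums identity
    have hPS : ∀ m, ∑ k ∈ range m, a n k * x k
        = (∑ j ∈ range m, Ahat n j * y j) - ∑ j ∈ range m, W n m j * y j := by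
      intro m
      have h1 : ∑ k ∈ range m, a n k * x k
          = ∑ k ∈ range m, a n k * Sapp α y k := by
        refine Finset.sum_congr rfl ?_
        intro k _
        rw [hxy k]
      rw [h1]
      have h2 : ∑ k ∈ range m, a n k * Sapp α y k
          = ∑ j ∈ range m, (∑ k ∈ Finset.Ico j m, fracDelta (-α) k j * a n k) * y j :=
        regroup (fracDelta (-α)) (fun h => fracDelta_triangle _ h) (a n) y m
      rw [h2]
      rw [← Finset.sum_sub_distrib]
      refine Finset.sum_congr rfl ?_
      intro j hj
      simp only [Finset.mem_range] at hj
      rw [colPartial_Ico, hWeq n m j (le_of_lt hj)]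
      ring
    unfold SeriesHasSum
    have := hT1.sub hT2
    rw [sub_zero] at this
    refine this.congr ?_
    intro m
    exact (hPS m).symm
  · intro n
    have hT1 : Tendsto (fun m => ∑ j ∈ range m, Ahat n j * y j) atTop
        (nhds (∑' j, Ahat n j * y j)) := (hsum n).hasSum.tendsto_sum_nat
    refine le_of_tendsto hT1.abs ?_
    filter_upwards with m
    exact le_trans (Finset.abs_sum_le_sum_abs _ _) (habs n m)

lemma signVec_apply_ge (c : ℕ → ℝ) (m j : ℕ) (hj : m ≤ j) : (signVec c m) j = 0 := by
  simp only [signVec, mkC0_apply, if_neg (Nat.not_lt.mpr hj)]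

lemma sum_mul_signVec (c : ℕ → ℝ) (m : ℕ) :
    ∑ j ∈ range m, c j * (signVec c m) j = ∑ j ∈ range m, |c j| := by
  have := rowCLM_signVec c m
  rwa [rowCLM_apply] at this

lemma colPartial_self (α : ℝ) (a : ℕ → ℕ → ℝ) (n m : ℕ) : colPartial α a n m m = 0 := by
  rw [colPartial]
  refine Finset.sum_eq_zero ?_
  intro i hi
  simp only [Finset.mem_range] at hi
  rw [fracDelta_triangle _ hi, zero_mul]

lemma forward_dir {α : ℝ} (hα : ∀ m : ℤ, α ≠ (m : ℝ)) (a : ℕ → ℕ → ℝ)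
    (H : ∀ x : ℕ → ℝ, memC0Delta α x →
      ∃ y : ℕ → ℝ, (∀ n, SeriesHasSum (fun k => a n k * x k) (y n)) ∧
        ∃ C : ℝ, ∀ n, |y n| ≤ C) :
    (∃ Ahat : ℕ → ℕ → ℝ,
      (∀ n k, SeriesHasSum (fun j => fracDelta (-α) (k + j) k * a n (k + j)) (Ahat n k)) ∧
      (∃ C : ℝ, ∀ n m, ∑ k ∈ Finset.range m, |Ahat n k| ≤ C)) ∧
    (∃ W : ℕ → ℕ → ℕ → ℝ,
      (∀ n m k, k ≤ m →
        SeriesHasSum (fun j => fracDelta (-α) (m + j) k * a n (m + j)) (W n m k)) ∧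
      (∀ n, ∃ C : ℝ, ∀ m, ∑ k ∈ Finset.range (m + 1), |W n m k| ≤ C)) := by
  -- columns of the inverse matrix lie in the domain space
  have hcolmem : ∀ k, memC0Delta α (fun j => fracDelta (-α) j k) := by
    intro k
    unfold memC0Delta
    have hval : ∀ n, fracDeltaSeq α (fun j => fracDelta (-α) j k) n
        = if n = k then 1 else 0 := fun n => fracDelta_inv hα n k
    refine tendsto_const_nhds.congr' ?_
    filter_upwards [eventually_gt_atTop k] with n hn
    rw [hval n, if_neg (by omega)]
  -- the matrix Ahat
  have hrow : ∀ k, ∃ z : ℕ → ℝ,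
      (∀ n, SeriesHasSum (fun j => a n j * fracDelta (-α) j k) (z n)) ∧
      ∃ c, ∀ n, |z n| ≤ c := fun k => H _ (hcolmem k)
  set Ahat : ℕ → ℕ → ℝ := fun n k => (hrow k).choose n with hAdef
  have hAh : ∀ n k, Tendsto (fun m => colPartial α a n k m) atTop (nhds (Ahat n k)) := by
    intro n k
    have h1 := (hrow k).choose_spec.1 n
    unfold SeriesHasSum at h1
    refine h1.congr ?_
    intro m
    refine Finset.sum_congr rfl ?_
    intro j _
    ring
  have hAser : ∀ n k, SeriesHasSum (fun j => fracDelta (-α) (k + j) k * a n (k + j))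
      (Ahat n k) := fun n k => (Ahat_iff α a n k _).mpr (hAh n k)
  -- membership of S y for y ∈ c₀
  have hx : ∀ y : C₀(ℕ, ℝ), memC0Delta α (Sapp α ⇑y) := by
    intro y
    unfold memC0Delta
    exact (c0_tendsto y).congr (fun n => (fracDeltaSeq_Sapp hα (⇑y) n).symm)
  set zfun : C₀(ℕ, ℝ) → ℕ → ℝ := fun y => (H _ (hx y)).choose with hzdef
  have hz1 : ∀ (y : C₀(ℕ, ℝ)) n,
      SeriesHasSum (fun k => a n k * Sapp α (⇑y) k) (zfun y n) :=
    fun y n => (H _ (hx y)).choose_spec.1 n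
  have hz2 : ∀ y : C₀(ℕ, ℝ), ∃ c, ∀ n, |zfun y n| ≤ c :=
    fun y => (H _ (hx y)).choose_spec.2
  -- the CLMs
  set f : ℕ → ℕ → (C₀(ℕ, ℝ) →L[ℝ] ℝ) :=
    fun n m => rowCLM (fun j => colPartial α a n j m) m with hfdef
  have hfval : ∀ n m (y : C₀(ℕ, ℝ)),
      f n m y = ∑ k ∈ range m, a n k * Sapp α (⇑y) k := by
    intro n m y
    rw [hfdef]
    rw [rowCLM_apply]
    have h2 : ∑ k ∈ range m, a n k * Sapp α (⇑y) k
        = ∑ j ∈ range m, (∑ k ∈ Finset.Ico j m, fracDelta (-α) k j * a n k) * y j :=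
      regroup (fracDelta (-α)) (fun h => fracDelta_triangle _ h) (a n) (⇑y) m
    rw [h2]
    refine Finset.sum_congr rfl ?_
    intro j _
    rw [colPartial_Ico]
  have hconv : ∀ n (y : C₀(ℕ, ℝ)),
      Tendsto (fun m => f n m y) atTop (nhds (zfun y n)) := by
    intro n y
    have h1 := hz1 y n
    unfold SeriesHasSum at h1
    refine h1.congr ?_
    intro m
    exact (hfval n m y).symm
  -- Banach-Steinhaus for each row
  have hBS : ∀ n, ∃ C', ∀ m, ‖f n m‖ ≤ C' := by
    intro n
    refine banach_steinhaus ?_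
    intro y
    obtain ⟨c, hc0, hc⟩ := bounded_of_tendsto (hconv n y)
    exact ⟨c, fun m => by rw [Real.norm_eq_abs]; exact hc m⟩
  choose Cn hCn using hBS
  have hCn0 : ∀ n, 0 ≤ Cn n := fun n => le_trans (norm_nonneg (f n 0)) (hCn n 0)
  have hWpart : ∀ n m, ∑ j ∈ range m, |colPartial α a n j m| ≤ Cn n := by
    intro n m
    have h1 : ∑ j ∈ range m, |colPartial α a n j m|
        = f n m (signVec (fun j => colPartial α a n j m) m) := by
      rw [hfdef]
      exact (rowCLM_signVec _ m).symm
    rw [h1]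
    calc f n m (signVec (fun j => colPartial α a n j m) m)
        ≤ |f n m (signVec (fun j => colPartial α a n j m) m)| := le_abs_self _
      _ ≤ ‖f n m‖ * ‖signVec (fun j => colPartial α a n j m) m‖ := by
          rw [← Real.norm_eq_abs]
          exact (f n m).le_opNorm _
      _ ≤ Cn n * 1 :=
          mul_le_mul (hCn n m) (signVec_norm_le _ _) (norm_nonneg _) (hCn0 n)
      _ = Cn n := mul_one _
  have hAbnd : ∀ n m, ∑ k ∈ range m, |Ahat n k| ≤ Cn n := by
    intro n m
    have h1 : Tendsto (fun p => ∑ k ∈ range m, |colPartial α a n k p|) atTop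
        (nhds (∑ k ∈ range m, |Ahat n k|)) := by
      refine tendsto_finset_sum _ ?_
      intro k _
      exact (hAh n k).abs
    refine le_of_tendsto h1 ?_
    filter_upwards [eventually_ge_atTop m] with p hp
    refine le_trans ?_ (hWpart n p)
    refine Finset.sum_le_sum_of_subset_of_nonneg (Finset.range_subset_range.mpr hp)
      (fun i _ _ => abs_nonneg _)
  -- the W matrix
  refine ⟨?_, ?_⟩
  swap
  · refine ⟨fun n m k => Ahat n k - colPartial α a n k m, ?_, ?_⟩
    · intro n m k _
      exact Wseries α a n m k (hAh n k)
    · intro n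
      refine ⟨Cn n + Cn n, ?_⟩
      intro m
      calc ∑ k ∈ range (m + 1), |Ahat n k - colPartial α a n k m|
          ≤ ∑ k ∈ range (m + 1), (|Ahat n k| + |colPartial α a n k m|) := by
            refine Finset.sum_le_sum ?_
            intro k _
            exact abs_sub _ _
        _ = (∑ k ∈ range (m + 1), |Ahat n k|)
              + ∑ k ∈ range (m + 1), |colPartial α a n k m| := by
            rw [Finset.sum_add_distrib]
        _ ≤ Cn n + Cn n := by
            refine add_le_add (hAbnd n (m + 1)) ?_
            rw [Finset.sum_range_succ, colPartial_self, abs_zero, add_zero]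
            exact hWpart n m
  -- the global bound via Banach-Steinhaus
  · -- build continuous linear functionals as limits
    have hbnd : ∀ n (y : C₀(ℕ, ℝ)), ‖zfun y n‖ ≤ Cn n * ‖y‖ := by
      intro n y
      rw [Real.norm_eq_abs]
      refine le_of_tendsto (hconv n y).abs ?_
      filter_upwards with m
      calc |f n m y| ≤ ‖f n m‖ * ‖y‖ := by
            rw [← Real.norm_eq_abs]; exact (f n m).le_opNorm _
        _ ≤ Cn n * ‖y‖ := mul_le_mul_of_nonneg_right (hCn n m) (norm_nonneg _)
    set h : ℕ → (C₀(ℕ, ℝ) →L[ℝ] ℝ) := fun n =>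
      LinearMap.mkContinuous
        { toFun := fun y => zfun y n
          map_add' := by
            intro y z
            refine tendsto_nhds_unique (hconv n (y + z)) ?_
            have := (hconv n y).add (hconv n z)
            refine this.congr ?_
            intro m
            rw [← map_add]
          map_smul' := by
            intro r y
            simp only [RingHom.id_apply, smul_eq_mul]
            refine tendsto_nhds_unique (hconv n (r • y)) ?_
            have := (hconv n y).const_mul r
            refine this.congr ?_
            intro m
            rw [(f n m).map_smul r y, smul_eq_mul] }
        (Cn n) (fun y => hbnd n y) with hhdef
    have happly : ∀ n y, h n y = zfun y n := fun n y => rfl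
    have hBS2 : ∃ M, ∀ n, ‖h n‖ ≤ M := by
      refine banach_steinhaus ?_
      intro y
      obtain ⟨c, hc⟩ := hz2 y
      exact ⟨c, fun n => by rw [happly, Real.norm_eq_abs]; exact hc n⟩
    obtain ⟨M, hM⟩ := hBS2
    refine ⟨Ahat, hAser, ⟨M, ?_⟩⟩
    intro n m
    set z := signVec (Ahat n) m with hzv
    have hlim : Tendsto (fun p => f n p z) atTop (nhds (∑ k ∈ range m, |Ahat n k|)) := by
      have h1 : Tendsto (fun p => ∑ j ∈ range m, colPartial α a n j p * z j) atTop
          (nhds (∑ j ∈ range m, Ahat n j * z j)) := by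
        refine tendsto_finset_sum _ ?_
        intro j _
        exact (hAh n j).mul_const _
      rw [← sum_mul_signVec (Ahat n) m]
      refine h1.congr' ?_
      filter_upwards [eventually_ge_atTop m] with p hp
      rw [hfdef, rowCLM_apply]
      refine Finset.sum_subset (Finset.range_subset_range.mpr hp) ?_
      intro j hj hj2
      simp only [Finset.mem_range, not_lt] at hj2
      rw [signVec_apply_ge _ _ _ hj2, mul_zero]
    have heq : zfun z n = ∑ k ∈ range m, |Ahat n k| :=
      tendsto_nhds_unique (hconv n z) hlim
    calc ∑ k ∈ range m, |Ahat n k| = zfun z n := heq.symm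
      _ ≤ |zfun z n| := le_abs_self _
      _ = |h n z| := by rw [happly]
      _ ≤ ‖h n‖ * ‖z‖ := by rw [← Real.norm_eq_abs]; exact (h n).le_opNorm _
      _ ≤ M * 1 := mul_le_mul (hM n) (signVec_norm_le _ _) (norm_nonneg _)
            (le_trans (norm_nonneg (h n)) (hM n))
      _ = M := mul_one _

/-- Characterization of `A ∈ (c₀(Δ^(α)), ℓ∞)`: `A` maps `c₀(Δ^(α))` into `ℓ∞` iff the
series defining `â_{nk}` and `w^{(A_n)}_{mk}` converge, `sup_n ∑_k |â_{nk}| < ∞` and,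
for every `n`, `sup_m ∑_{k=0}^m |w^{(A_n)}_{mk}| < ∞`. -/
theorem matrix_c0Delta_into_linf (α : ℝ) (hα : ∀ m : ℤ, α ≠ (m : ℝ))
    (a : ℕ → ℕ → ℝ) :
    (∀ x : ℕ → ℝ, memC0Delta α x →
      ∃ y : ℕ → ℝ, (∀ n, SeriesHasSum (fun k => a n k * x k) (y n)) ∧
        ∃ C : ℝ, ∀ n, |y n| ≤ C) ↔
    (∃ Ahat : ℕ → ℕ → ℝ,
      (∀ n k, SeriesHasSum (fun j => fracDelta (-α) (k + j) k * a n (k + j)) (Ahat n k)) ∧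
      (∃ C : ℝ, ∀ n m, ∑ k ∈ Finset.range m, |Ahat n k| ≤ C)) ∧
    (∃ W : ℕ → ℕ → ℕ → ℝ,
      (∀ n m k, k ≤ m →
        SeriesHasSum (fun j => fracDelta (-α) (m + j) k * a n (m + j)) (W n m k)) ∧
      (∀ n, ∃ C : ℝ, ∀ m, ∑ k ∈ Finset.range (m + 1), |W n m k| ≤ C)) := by
  constructor
  · intro H
    exact forward_dir hα a H
  · rintro ⟨⟨Ahat, hAs, ⟨C, hC⟩⟩, ⟨W, hWs, hWb⟩⟩
    exact converse_dir hα a Ahat W hAs hC hWs hWb
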